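/- arXiv:2512.23657 — 6 statements merged into one kernel-verified Lean document; each statement's English description precedes it below -/
import Mathlib

section
/- For every integer k ≥ 2, the unique positive root α_k of P_k satisfies α_k < φ, where φ = (1+√5)/2 is the golden ratio. -/
/-- `P k x = 2 + x + x^2 + ... + x^(k-2) - x^k`. -/
noncomputable def P (k : ℕ) (x : ℝ) : ℝ := 2 + ∑ i ∈ Finset.Icc 1 (k - 2), x ^ i - x ^ k

lemma geom_icc (x : ℝ) (n : ℕ) :
    (x - 1) * ∑ i ∈ Finset.Icc 1 n, x ^ i = x ^ (n + 1) - x := by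
  induction n with
  | zero => simp
  | succ n ih =>
    rw [Finset.sum_Icc_succ_top (by omega), mul_add, ih]
    ring

theorem root_lt_goldenRatio (k : ℕ) (hk : 2 ≤ k) (α : ℝ)
    (hpos : 0 < α) (hroot : P k α = 0) : α < (1 + Real.sqrt 5) / 2 := by
  by_contra h
  push_neg at h
  have h5 : Real.sqrt 5 ^ 2 = 5 := Real.sq_sqrt (by norm_num)
  have h5n : (2:ℝ) ≤ Real.sqrt 5 := by nlinarith [Real.sqrt_nonneg 5]
  have hα1 : 1 < α := by nlinarith
  have hc : 0 ≤ α ^ 2 - α - 1 := by nlinarith [Real.sqrt_nonneg 5]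
  have ht : 1 ≤ α ^ (k - 1) := one_le_pow₀ hα1.le
  unfold P at hroot
  have hsum := geom_icc α (k - 2)
  have hk1 : k - 2 + 1 = k - 1 := by omega
  have hk2 : k - 1 + 1 = k := by omega
  rw [hk1] at hsum
  have hαk : α ^ k = α * α ^ (k - 1) := by nth_rewrite 1 [← hk2]; ring
  have hS : ∑ i ∈ Finset.Icc 1 (k - 2), α ^ i = α ^ k - 2 := by linarith
  rw [hS, hαk] at hsum
  set t := α ^ (k - 1) with htdef
  have key : t * (α ^ 2 - α - 1) = α - 2 := by nlinarith [hsum]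
  nlinarith [mul_nonneg (sub_nonneg.mpr ht) hc, sq_nonneg (α - 1)]
end

section
/- The sequence α_k of unique positive roots of P_k(x) = 2 + x + ... + x^{k-2} - x^k is strictly increasing in k (for k ≥ 2). -/
lemma sum_shift (x : ℝ) (n : ℕ) :
    x * ∑ i ∈ Finset.Icc 1 n, x ^ i = ∑ i ∈ Finset.Icc 2 (n + 1), x ^ i := by
  induction n with
  | zero => simp
  | succ n ih =>
    rw [Finset.sum_Icc_succ_top (by omega), Finset.sum_Icc_succ_top (show 2 ≤ n + 1 + 1 by omega),
      mul_add, ih, ← pow_succ']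

lemma sum_bot (x : ℝ) (n : ℕ) :
    ∑ i ∈ Finset.Icc 1 (n + 1), x ^ i = x + ∑ i ∈ Finset.Icc 2 (n + 1), x ^ i := by
  induction n with
  | zero => simp
  | succ n ih =>
    rw [Finset.sum_Icc_succ_top (by omega), Finset.sum_Icc_succ_top (show 2 ≤ n + 1 + 1 by omega),
      ih]
    ring

lemma mono (m : ℕ) (hm : 1 ≤ m) (x y : ℝ) (hx : 0 < x) (hxy : x < y) :
    P m y * x ^ m < P m x * y ^ m := by
  have h1 : x ^ m < y ^ m := pow_lt_pow_left₀ hxy hx.le (by omega)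
  have h2 : (∑ i ∈ Finset.Icc 1 (m - 2), y ^ i) * x ^ m
      ≤ (∑ i ∈ Finset.Icc 1 (m - 2), x ^ i) * y ^ m := by
    rw [Finset.sum_mul, Finset.sum_mul]
    apply Finset.sum_le_sum
    intro i hi
    simp only [Finset.mem_Icc] at hi
    have him : i ≤ m := by omega
    have hy : 0 < y := hx.trans hxy
    calc y ^ i * x ^ m = (y ^ i * x ^ i) * x ^ (m - i) := by
          rw [mul_assoc, ← pow_add]; congr 2; omega
      _ ≤ (y ^ i * x ^ i) * y ^ (m - i) := by
          apply mul_le_mul_of_nonneg_left (pow_le_pow_left₀ hx.le hxy.le _)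
          positivity
      _ = x ^ i * y ^ m := by
          rw [mul_comm (y ^ i), mul_assoc, ← pow_add]; congr 2; omega
  unfold P
  nlinarith [h1, h2]

lemma P_two_neg (k : ℕ) (hk : 2 ≤ k) : P k 2 < 0 := by
  obtain ⟨n, rfl⟩ : ∃ n, k = n + 2 := ⟨k - 2, by omega⟩
  have hs : ∀ n : ℕ, ∑ i ∈ Finset.Icc 1 n, (2:ℝ) ^ i = 2 ^ (n + 1) - 2 := by
    intro n
    induction n with
    | zero => simp
    | succ n ih => rw [Finset.sum_Icc_succ_top (by omega), ih]; ring
  unfold P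
  simp only [Nat.add_sub_cancel, hs]
  have : (0:ℝ) < 2 ^ (n + 1) := by positivity
  have h2 : (2:ℝ) ^ (n + 2) = 2 * 2 ^ (n + 1) := by ring
  nlinarith

lemma root_lt_two (k : ℕ) (hk : 2 ≤ k) (α : ℝ) (hαpos : 0 < α) (hα : P k α = 0) : α < 2 := by
  by_contra h
  push_neg at h
  rcases eq_or_lt_of_le h with h | h
  · exact absurd (h ▸ hα) (P_two_neg k hk).ne
  · have := mono k (by omega) 2 α (by norm_num) h
    rw [hα, zero_mul] at this
    have hαk : (0:ℝ) < α ^ k := by positivity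
    nlinarith [P_two_neg k hk]

lemma P_succ_root (k : ℕ) (hk : 2 ≤ k) (α : ℝ) (hα : P k α = 0) :
    P (k + 1) α = 2 - α := by
  obtain ⟨n, rfl⟩ : ∃ n, k = n + 2 := ⟨k - 2, by omega⟩
  unfold P at *
  simp only [Nat.add_sub_cancel] at *
  have hpow : α ^ (n + 2) = 2 + ∑ i ∈ Finset.Icc 1 n, α ^ i := by linarith
  have h1 : α ^ (n + 2 + 1) = α * α ^ (n + 2) := by ring
  rw [show n + 2 + 1 - 2 = n + 1 by omega, h1, hpow, mul_add, sum_shift, sum_bot]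
  ring

theorem roots_strictly_increasing (k : ℕ) (hk : 2 ≤ k) (α β : ℝ)
    (hαpos : 0 < α) (hα : P k α = 0) (hβpos : 0 < β) (hβ : P (k + 1) β = 0) :
    α < β := by
  have hα2 : α < 2 := root_lt_two k hk α hαpos hα
  have hPα : P (k + 1) α = 2 - α := P_succ_root k hk α hα
  by_contra h
  push_neg at h
  rcases eq_or_lt_of_le h with h | h
  · rw [h, hPα] at hβ; linarith
  · have := mono (k + 1) (by omega) β α hβpos h
    rw [hβ, zero_mul, hPα] at this
    have : (0:ℝ) < β ^ (k + 1) := by positivity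
    nlinarith
end

section
/- As k → ∞, the unique positive root α_k of P_k(x) = 2 + x + ... + x^{k-2} - x^k converges to the golden ratio φ = (1+√5)/2. -/
lemma key_bounds (k : ℕ) (hk : 2 ≤ k) (α : ℝ) (h0 : 0 < α) (hP : P k α = 0) :
    (1 + Real.sqrt 5) / 2 - 2 / k ≤ α ∧ α ≤ (1 + Real.sqrt 5) / 2 := by
  obtain ⟨m, rfl⟩ : ∃ m, k = m + 2 := ⟨k - 2, by omega⟩
  set φ : ℝ := (1 + Real.sqrt 5) / 2 with hφdef
  have h5 : Real.sqrt 5 ^ 2 = 5 := Real.sq_sqrt (by norm_num)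
  have hs5 : 1 < Real.sqrt 5 := by nlinarith [Real.sqrt_nonneg 5]
  have hφ2 : φ ^ 2 = φ + 1 := by rw [hφdef]; nlinarith
  have hφ1 : 1 < φ := by rw [hφdef]; linarith
  unfold P at hP
  simp only [Nat.add_sub_cancel] at hP
  -- rewrite the sum
  have hins : Finset.range (m + 1) = insert 0 (Finset.Icc 1 m) := by
    ext x; simp [Finset.mem_range, Finset.mem_Icc]; omega
  have hsum : ∑ i ∈ Finset.range (m + 1), α ^ i
      = 1 + ∑ i ∈ Finset.Icc 1 m, α ^ i := by
    rw [hins, Finset.sum_insert (by simp)]; simp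
  -- α > 1
  have hSnn : (0:ℝ) ≤ ∑ i ∈ Finset.Icc 1 m, α ^ i :=
    Finset.sum_nonneg fun i _ => (pow_pos h0 i).le
  have hα1 : 1 < α := by
    by_contra h; push_neg at h
    have : α ^ (m + 2) ≤ 1 := pow_le_one₀ h0.le h
    linarith
  -- each term ≥ 1 so the sum is ≥ m
  have hS : (m : ℝ) ≤ ∑ i ∈ Finset.Icc 1 m, α ^ i := by
    have := Finset.card_nsmul_le_sum (Finset.Icc 1 m) (fun i => α ^ i) 1
      (fun i _ => one_le_pow₀ hα1.le)
    simpa [Nat.card_Icc] using this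
  have hpowbig : (m : ℝ) + 2 ≤ α ^ (m + 2) := by linarith
  -- key identity
  have hne : α - 1 ≠ 0 := by intro h; linarith [sub_eq_zero.mp h]
  have hg := geom_sum_eq hα1.ne' (m + 1)
  have hP' : α ^ (m + 2) - 1 = (α ^ (m + 1) - 1) / (α - 1) := by
    rw [hg] at hsum; linarith
  have heq : (α ^ (m + 2) - 1) * (α - 1) = α ^ (m + 1) - 1 := by
    rw [hP', div_mul_cancel₀ _ hne]
  have hid : α ^ (m + 1) * (α ^ 2 - α - 1) = α - 2 := by linear_combination heq
  have hpowpos : (0:ℝ) < α ^ (m + 1) := pow_pos h0 _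
  -- α < 2
  have hα2 : α < 2 := by
    by_contra h; push_neg at h
    have hq : 1 ≤ α ^ 2 - α - 1 := by nlinarith
    have h1 : α ≤ α ^ (m + 1) := le_self_pow₀ hα1.le (by omega)
    nlinarith [mul_le_mul_of_nonneg_left hq hpowpos.le]
  -- α < φ
  have hneg : α ^ 2 - α - 1 < 0 := by
    by_contra h; push_neg at h
    nlinarith [mul_nonneg hpowpos.le h]
  have hαφ : α < φ := by
    by_contra h; push_neg at h
    nlinarith [mul_nonneg (by linarith : (0:ℝ) ≤ α - φ) (by linarith : (0:ℝ) ≤ α + φ - 1)]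
  -- α^(m+1) ≥ (m+2)/2
  have hA : ((m : ℝ) + 2) / 2 ≤ α ^ (m + 1) := by
    have hps : α ^ (m + 2) = α ^ (m + 1) * α := pow_succ α (m + 1)
    nlinarith
  -- main estimate
  have hkey : (φ - α) * ((φ + α - 1) * α ^ (m + 1)) = 2 - α := by
    linear_combination (α ^ (m + 1)) * hφ2 - hid
  have h1' : (1:ℝ) ≤ φ + α - 1 := by linarith
  have hfin : (φ - α) * (((m : ℝ) + 2) / 2) ≤ 1 := by
    have hstep : ((m : ℝ) + 2) / 2 ≤ (φ + α - 1) * α ^ (m + 1) :=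
      le_trans hA (le_mul_of_one_le_left hpowpos.le h1')
    calc (φ - α) * (((m : ℝ) + 2) / 2)
        ≤ (φ - α) * ((φ + α - 1) * α ^ (m + 1)) :=
          mul_le_mul_of_nonneg_left hstep (by linarith)
      _ = 2 - α := hkey
      _ ≤ 1 := by linarith
  have hm2 : (0:ℝ) < (m : ℝ) + 2 := by positivity
  constructor
  · have h2 : φ - α ≤ 2 / ((m : ℝ) + 2) := by
      rw [le_div_iff₀ hm2]; linarith [hfin]
    push_cast; linarith
  · linarith

theorem roots_tendsto_goldenRatio (α : ℕ → ℝ)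
    (hα : ∀ k, 2 ≤ k → 0 < α k ∧ P k (α k) = 0) :
    Filter.Tendsto α Filter.atTop (nhds ((1 + Real.sqrt 5) / 2)) := by
  have hbound : ∀ k, 2 ≤ k →
      (1 + Real.sqrt 5) / 2 - 2 / k ≤ α k ∧ α k ≤ (1 + Real.sqrt 5) / 2 :=
    fun k hk => key_bounds k hk (α k) (hα k hk).1 (hα k hk).2
  apply tendsto_of_tendsto_of_tendsto_of_le_of_le'
    (g := fun k : ℕ => (1 + Real.sqrt 5) / 2 - 2 / k)
    (h := fun _ : ℕ => (1 + Real.sqrt 5) / 2)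
  · simpa using tendsto_const_nhds.sub (tendsto_const_div_atTop_nhds_zero_nat (2:ℝ))
  · exact tendsto_const_nhds
  · filter_upwards [Filter.eventually_ge_atTop 2] with k hk using (hbound k hk).1
  · filter_upwards [Filter.eventually_ge_atTop 2] with k hk using (hbound k hk).2
end

section
/- Let k ≥ 2 and let (a_D) be a sequence of positive reals satisfying a_D = ∑_{i=2}^{k-1} a_{D-i} + 2·a_{D-k} + k for all D ≥ k. Then there exist constants 0 < c₁ ≤ c₂ such that c₁·α_k^D ≤ a_D ≤ c₂·α_k^D for all D, where α_k is the unique positive root of P_k(x) = 2 + x + ... + x^{k-2} − x^k. -/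
theorem recurrence_growth_order (k : ℕ) (hk : 2 ≤ k) (α : ℝ)
    (hαpos : 0 < α) (hαroot : P k α = 0)
    (a : ℕ → ℝ) (hapos : ∀ D, 0 < a D)
    (hrec : ∀ D, k ≤ D → a D = ∑ i ∈ Finset.Icc 2 (k - 1), a (D - i) + 2 * a (D - k) + k) :
    ∃ c₁ c₂ : ℝ, 0 < c₁ ∧ c₁ ≤ c₂ ∧ ∀ D, c₁ * α ^ D ≤ a D ∧ a D ≤ c₂ * α ^ D := by
  have hkR : (2:ℝ) ≤ (k:ℝ) := by exact_mod_cast hk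
  -- reindex sum
  have hsum : ∑ i ∈ Finset.Icc 2 (k-1), α ^ (k - i) = ∑ j ∈ Finset.Icc 1 (k-2), α ^ j := by
    apply Finset.sum_nbij' (i := fun i => k - i) (j := fun j => k - j)
    · intro i hi; simp only [Finset.mem_Icc] at *; omega
    · intro j hj; simp only [Finset.mem_Icc] at *; omega
    · intro i hi; simp only [Finset.mem_Icc] at hi; omega
    · intro j hj; simp only [Finset.mem_Icc] at hj; omega
    · intro i hi; rfl
  have hαk : ∑ i ∈ Finset.Icc 2 (k-1), α ^ (k - i) + 2 = α ^ k := by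
    unfold P at hαroot; linarith [hsum]
  have hαpow : ∀ D : ℕ, (0:ℝ) < α ^ D := fun D => pow_pos hαpos D
  -- key algebraic identity
  have hkey : ∀ (c : ℝ) (D : ℕ), k ≤ D →
      ∑ i ∈ Finset.Icc 2 (k-1), c * α ^ (D - i) + 2 * (c * α ^ (D - k)) = c * α ^ D := by
    intro c D hD
    have h1 : ∀ i ∈ Finset.Icc 2 (k-1), c * α ^ (D - i) = c * α ^ (D - k) * α ^ (k - i) := by
      intro i hi
      simp only [Finset.mem_Icc] at hi
      have h : D - i = (D - k) + (k - i) := by omega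
      rw [h, pow_add]; ring
    rw [Finset.sum_congr rfl h1, ← Finset.mul_sum]
    have h2 : α ^ D = α ^ (D - k) * α ^ k := by
      rw [← pow_add]; congr 1; omega
    calc c * α ^ (D-k) * (∑ i ∈ Finset.Icc 2 (k-1), α ^ (k-i)) + 2 * (c * α ^ (D-k))
        = c * α ^ (D-k) * (∑ i ∈ Finset.Icc 2 (k-1), α ^ (k-i) + 2) := by ring
      _ = c * α ^ (D-k) * α ^ k := by rw [hαk]
      _ = c * α ^ D := by rw [h2]; ring
  -- constants
  have hSne : (Finset.range k).Nonempty := ⟨0, by simp; omega⟩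
  set c₁ := (Finset.range k).inf' hSne (fun D => a D / α ^ D) with hc1
  set c₂ := max c₁ ((Finset.range k).sup' hSne (fun D => (a D + 2) / α ^ D)) with hc2
  have hc1pos : 0 < c₁ := by
    rw [hc1, Finset.lt_inf'_iff]
    intro D _
    exact div_pos (hapos D) (hαpow D)
  have hbase1 : ∀ D, D < k → c₁ * α ^ D ≤ a D := by
    intro D hD
    have h : c₁ ≤ a D / α ^ D :=
      Finset.inf'_le (fun D => a D / α ^ D) (by simp [hD] : D ∈ Finset.range k)
    rw [← le_div_iff₀ (hαpow D)]
    exact h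
  have hbase2 : ∀ D, D < k → a D + 2 ≤ c₂ * α ^ D := by
    intro D hD
    have h : (a D + 2) / α ^ D ≤ (Finset.range k).sup' hSne (fun D => (a D + 2) / α ^ D) :=
      Finset.le_sup' (fun D => (a D + 2) / α ^ D) (by simp [hD] : D ∈ Finset.range k)
    have h2 : (a D + 2) / α ^ D ≤ c₂ := le_trans h (le_max_right _ _)
    rw [div_le_iff₀ (hαpow D)] at h2
    exact h2
  -- lower bound
  have L : ∀ D, c₁ * α ^ D ≤ a D := by
    intro D
    induction D using Nat.strong_induction_on with
    | _ D ih =>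
      by_cases hD : D < k
      · exact hbase1 D hD
      · push_neg at hD
        rw [hrec D hD]
        have t1 : ∑ i ∈ Finset.Icc 2 (k-1), c₁ * α ^ (D - i)
            ≤ ∑ i ∈ Finset.Icc 2 (k-1), a (D - i) := by
          apply Finset.sum_le_sum
          intro i hi
          simp only [Finset.mem_Icc] at hi
          exact ih (D - i) (by omega)
        have t2 : c₁ * α ^ (D - k) ≤ a (D - k) := ih (D - k) (by omega)
        have hkk := hkey c₁ D hD
        linarith
  -- upper bound (with slack 2)
  have U : ∀ D, a D + 2 ≤ c₂ * α ^ D := by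
    intro D
    induction D using Nat.strong_induction_on with
    | _ D ih =>
      by_cases hD : D < k
      · exact hbase2 D hD
      · push_neg at hD
        rw [hrec D hD]
        have t1 : ∑ i ∈ Finset.Icc 2 (k-1), a (D - i)
            ≤ ∑ i ∈ Finset.Icc 2 (k-1), (c₂ * α ^ (D - i) - 2) := by
          apply Finset.sum_le_sum
          intro i hi
          simp only [Finset.mem_Icc] at hi
          have := ih (D - i) (by omega)
          linarith
        have t1' : ∑ i ∈ Finset.Icc 2 (k-1), (c₂ * α ^ (D - i) - 2)
            = ∑ i ∈ Finset.Icc 2 (k-1), c₂ * α ^ (D - i) - 2 * ((k:ℝ) - 2) := by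
          rw [Finset.sum_sub_distrib, Finset.sum_const, Nat.card_Icc]
          have hc : ((k - 1 + 1 - 2 : ℕ) : ℝ) = (k:ℝ) - 2 := by
            have h : k - 1 + 1 - 2 = k - 2 := by omega
            rw [h, Nat.cast_sub hk]; norm_num
          rw [nsmul_eq_mul, hc]; ring
        have t2 : a (D - k) ≤ c₂ * α ^ (D - k) - 2 := by
          have := ih (D - k) (by omega); linarith
        have hkk := hkey c₂ D hD
        linarith
  refine ⟨c₁, c₂, hc1pos, le_max_left _ _, fun D => ⟨L D, by linarith [U D]⟩⟩
end

section
/- Let w: ℕ × ℕ → ℕ satisfy: w(d,0) = w(0,h) = 1 for all d,h; w(d,h) ≤ w(d+1,h); w(d,h) ≤ 2·w(d−1,h) for d ≥ 1; and for d,h > 0, w(d,h) = ∑_{j=1}^{r} w(d_j, h−1) for some r ≤ k and d > d_1 > d_2 > ... > d_{r-1} ≥ d_r ≥ 0 achieving the maximum. Then for d, h > 0 and l = min(d, k−1): w(d,h) = ∑_{i=1}^{l-1} w(d−i, h−1) + 2·w(d−l, h−1). -/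
/-- A decomposition `d > d_1 > d_2 > ... > d_{r-1} ≥ d_r ≥ 0` with `1 ≤ r ≤ k` branches,
encoded by `ds j = d_{j+1}` for `j < r`. -/
def Admissible (k d r : ℕ) (ds : ℕ → ℕ) : Prop :=
  1 ≤ r ∧ r ≤ k ∧ ds 0 < d ∧
  (∀ i, i + 2 < r → ds (i + 1) < ds i) ∧
  (∀ i, i + 2 = r → ds (i + 1) ≤ ds i)

theorem segment_recursion (k : ℕ) (hk : 2 ≤ k) (w : ℕ → ℕ → ℕ)
    (hax1 : ∀ d, w d 0 = 1) (hax2 : ∀ h, w 0 h = 1)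
    (hmono : ∀ d h, w d h ≤ w (d + 1) h)
    (hdbl : ∀ d h, 1 ≤ d → w d h ≤ 2 * w (d - 1) h)
    (hmax : ∀ d h, 0 < d → 0 < h →
      (∃ r ds, Admissible k d r ds ∧ w d h = ∑ j ∈ Finset.range r, w (ds j) (h - 1)) ∧
      (∀ r ds, Admissible k d r ds → ∑ j ∈ Finset.range r, w (ds j) (h - 1) ≤ w d h)) :
    ∀ d h, 0 < d → 0 < h →
      w d h = ∑ i ∈ Finset.Icc 1 (min d (k - 1) - 1), w (d - i) (h - 1)
        + 2 * w (d - min d (k - 1)) (h - 1) := by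
  have wmono : ∀ (h' a b : ℕ), a ≤ b → w a h' ≤ w b h' := by
    intro h' a b hab
    induction hab with
    | refl => exact le_refl _
    | step _ ih => exact le_trans ih (hmono _ _)
  intro d h hd hh
  set l := min d (k - 1) with hldef
  have hl1 : 1 ≤ l := by omega
  have hld : l ≤ d := by omega
  have hlk : l + 1 ≤ k := by omega
  set g : ℕ → ℕ := fun i => w (d - i) (h - 1) with hg
  set F : ℕ → ℕ := fun m => (∑ i ∈ Finset.Icc 1 m, g i) + g m with hF
  have hFstep : ∀ m, m < d → F m ≤ F (m + 1) := by
    intro m hm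
    have h1 : Finset.Icc 1 (m + 1) = insert (m + 1) (Finset.Icc 1 m) := by
      ext x; simp only [Finset.mem_Icc, Finset.mem_insert]; omega
    have h2 : g m ≤ 2 * g (m + 1) := by
      have h3 := hdbl (d - m) (h - 1) (by omega)
      have h4 : d - m - 1 = d - (m + 1) := by omega
      rw [h4] at h3
      simpa [hg] using h3
    have hnot : (m + 1) ∉ Finset.Icc 1 m := by
      simp only [Finset.mem_Icc, not_and]; omega
    simp only [hF, h1, Finset.sum_insert hnot]
    linarith
  have hFle : ∀ t m, m + t ≤ d → F m ≤ F (m + t) := by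
    intro t
    induction t with
    | zero => intro m _; exact le_refl _
    | succ n ih =>
      intro m hmn
      have h1 := ih m (by omega)
      have h2 := hFstep (m + n) (by omega)
      calc F m ≤ F (m + n) := h1
        _ ≤ F (m + n + 1) := h2
        _ = F (m + (n + 1)) := by ring_nf
  have hIccL : ∀ m : ℕ, ∑ i ∈ Finset.Icc 1 m, g i = ∑ j ∈ Finset.range m, g (j + 1) := by
    intro m
    have h1 : Finset.Icc 1 m = Finset.Ico 1 (m + 1) := by
      ext x; simp only [Finset.mem_Icc, Finset.mem_Ico]; omega
    rw [h1, Finset.sum_Ico_eq_sum_range]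
    simp [add_comm]
  -- key bound for any admissible decomposition
  have key : ∀ r ds, Admissible k d r ds →
      ∑ j ∈ Finset.range r, w (ds j) (h - 1) ≤ F l := by
    rintro r ds ⟨hr1, hrk, hds0, hstrict, heqa⟩
    obtain ⟨m, rfl⟩ : ∃ m, r = m + 1 := ⟨r - 1, by omega⟩
    have hstep : ∀ j, j < m → ds j + (j + 1) ≤ d := by
      intro j
      induction j with
      | zero => intro _; omega
      | succ n ih =>
        intro hj
        have h1 := hstrict n (by omega)
        have h2 := ih (by omega)
        omega
    have hml : m ≤ l := by
      rcases Nat.lt_or_ge m 1 with h2 | h2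
      · omega
      · have h3 := hstep (m - 1) (by omega)
        omega
    have hlast : ds m ≤ d - m := by
      rcases Nat.lt_or_ge m 1 with h2 | h2
      · have hm0 : m = 0 := by omega
        subst hm0; omega
      · have h3 := heqa (m - 1) (by omega)
        have h4 := hstep (m - 1) (by omega)
        have h5 : m - 1 + 1 = m := by omega
        rw [h5] at h3
        omega
    have hbound : ∑ j ∈ Finset.range (m + 1), w (ds j) (h - 1) ≤ F m := by
      rw [Finset.sum_range_succ]
      have t1 : ∑ j ∈ Finset.range m, w (ds j) (h - 1) ≤ ∑ j ∈ Finset.range m, g (j + 1) := by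
        apply Finset.sum_le_sum
        intro j hj
        simp only [Finset.mem_range] at hj
        have := hstep j hj
        exact wmono _ _ _ (by omega)
      have t2 : w (ds m) (h - 1) ≤ g m := wmono _ _ _ hlast
      have t3 : F m = ∑ j ∈ Finset.range m, g (j + 1) + g m := by
        simp only [hF]; rw [hIccL]
      rw [t3]
      exact Nat.add_le_add t1 t2
    have hFm : F m ≤ F l := by
      have := hFle (l - m) m (by omega)
      have he : m + (l - m) = l := by omega
      rwa [he] at this
    exact le_trans hbound hFm
  -- the canonical decomposition
  set cds : ℕ → ℕ := fun j => d - min (j + 1) l with hcds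
  have hcanon : Admissible k d (l + 1) cds := by
    refine ⟨by omega, hlk, ?_, ?_, ?_⟩
    · show d - min (0 + 1) l < d
      omega
    · intro i hi
      show d - min (i + 1 + 1) l < d - min (i + 1) l
      omega
    · intro i hi
      show d - min (i + 1 + 1) l ≤ d - min (i + 1) l
      omega
  have hcansum : ∑ j ∈ Finset.range (l + 1), w (cds j) (h - 1) = F l := by
    rw [Finset.sum_range_succ]
    have e1 : ∀ j ∈ Finset.range l, w (cds j) (h - 1) = g (j + 1) := by
      intro j hj
      simp only [Finset.mem_range] at hj
      have : min (j + 1) l = j + 1 := by omega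
      simp [hcds, hg, this]
    rw [Finset.sum_congr rfl e1]
    have e2 : w (cds l) (h - 1) = g l := by
      have : min (l + 1) l = l := by omega
      simp [hcds, hg, this]
    rw [e2]
    simp only [hF]
    rw [hIccL]
  have hTF : F l = ∑ i ∈ Finset.Icc 1 (l - 1), g i + 2 * g l := by
    have h1 : Finset.Icc 1 l = insert l (Finset.Icc 1 (l - 1)) := by
      ext x; simp only [Finset.mem_Icc, Finset.mem_insert]; omega
    have hnot : l ∉ Finset.Icc 1 (l - 1) := by
      simp only [Finset.mem_Icc, not_and]; omega
    simp only [hF, h1, Finset.sum_insert hnot]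
    ring
  have hub : w d h ≤ F l := by
    obtain ⟨⟨r, ds, hadm, hsum⟩, -⟩ := hmax d h hd hh
    rw [hsum]; exact key r ds hadm
  have hlb : F l ≤ w d h := by
    have := (hmax d h hd hh).2 (l + 1) cds hcanon
    rwa [hcansum] at this
  have hwF : w d h = F l := le_antisymm hub hlb
  rw [hwF, hTF]
end

section
/- With w defined by w(d,0) = w(0,h) = 1 and w(d,h) = ∑_{i=1}^{l-1} w(d−i,h−1) + 2·w(d−l,h−1), l = min(d,k−1), and w*(D) = ∑_{d=0}^{D} w(d, D−d), the function w* satisfies w*(D) = ∑_{i=2}^{k-1} w*(D−i) + 2·w*(D−k) + k for all D ≥ k. -/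
private lemma split0 (f : ℕ → ℕ) (n : ℕ) :
    ∑ d ∈ Finset.range (n + 1), f d = f 0 + ∑ d ∈ Finset.Icc 1 n, f d := by
  have h : Finset.range (n + 1) = insert 0 (Finset.Icc 1 n) := by
    ext x; simp [Finset.mem_Icc, Finset.mem_range]; omega
  rw [h, Finset.sum_insert (by simp)]

theorem wstar_recurrence (k : ℕ) (hk : 2 ≤ k) (w : ℕ → ℕ → ℕ)
    (hax1 : ∀ d, w d 0 = 1) (hax2 : ∀ h, w 0 h = 1)
    (hrec : ∀ d h, 1 ≤ d → 1 ≤ h →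
      w d h = ∑ i ∈ Finset.Icc 1 (min d (k - 1) - 1), w (d - i) (h - 1)
        + 2 * w (d - min d (k - 1)) (h - 1))
    (wstar : ℕ → ℕ)
    (hws : ∀ D, wstar D = ∑ d ∈ Finset.range (D + 1), w d (D - d)) :
    ∀ D, k ≤ D →
      wstar D = ∑ i ∈ Finset.Icc 2 (k - 1), wstar (D - i) + 2 * wstar (D - k) + k := by
  intro D hD
  -- Step 1: expand wstar D, peeling off d = 0 and d = D.
  have e0 : wstar D = 1 + (∑ d ∈ Finset.Icc 1 (D - 1), w d (D - d)) + 1 := by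
    rw [hws]
    have h : D + 1 = (D - 1 + 1) + 1 := by omega
    rw [h, Finset.sum_range_succ, split0]
    have hDD : D - 1 + 1 = D := by omega
    rw [hDD, Nat.sub_self, hax1, Nat.sub_zero, hax2]
  -- Step 2: expand each middle term via the recursion.
  have e1 : ∑ d ∈ Finset.Icc 1 (D - 1), w d (D - d)
      = (∑ d ∈ Finset.Icc 1 (D - 1), ∑ i ∈ Finset.Icc 1 (min d (k - 1) - 1),
          w (d - i) (D - d - 1))
        + ∑ d ∈ Finset.Icc 1 (D - 1), 2 * w (d - min d (k - 1)) (D - d - 1) := by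
    rw [← Finset.sum_add_distrib]
    apply Finset.sum_congr rfl
    intro d hd
    simp only [Finset.mem_Icc] at hd
    exact hrec d (D - d) (by omega) (by omega)
  -- Step 3: the double sum, reindexed.
  have eA : (∑ d ∈ Finset.Icc 1 (D - 1), ∑ i ∈ Finset.Icc 1 (min d (k - 1) - 1),
        w (d - i) (D - d - 1))
      = ∑ i ∈ Finset.Icc 1 (k - 2), ∑ a ∈ Finset.Icc 1 (D - 1 - i),
          w a (D - 1 - i - a) := by
    have h1 : ∀ d ∈ Finset.Icc 1 (D - 1),
        ∑ i ∈ Finset.Icc 1 (min d (k - 1) - 1), w (d - i) (D - d - 1)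
        = ∑ i ∈ Finset.Icc 1 (k - 2), if i + 1 ≤ d then w (d - i) (D - d - 1) else 0 := by
      intro d hd
      simp only [Finset.mem_Icc] at hd
      rw [← Finset.sum_filter]
      apply Finset.sum_congr _ (fun _ _ => rfl)
      ext x
      simp only [Finset.mem_Icc, Finset.mem_filter]
      omega
    rw [Finset.sum_congr rfl h1, Finset.sum_comm]
    apply Finset.sum_congr rfl
    intro i hi
    simp only [Finset.mem_Icc] at hi
    rw [← Finset.sum_filter]
    have h2 : (Finset.Icc 1 (D - 1)).filter (fun d => i + 1 ≤ d)
        = Finset.Icc (i + 1) (D - 1) := by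
      ext x
      simp only [Finset.mem_Icc, Finset.mem_filter]
      omega
    rw [h2]
    have h3 : Finset.Icc (i + 1) (D - 1)
        = Finset.map (addRightEmbedding i) (Finset.Icc 1 (D - 1 - i)) := by
      rw [Finset.map_add_right_Icc]
      congr 1 <;> omega
    rw [h3, Finset.sum_map]
    apply Finset.sum_congr rfl
    intro a ha
    simp only [Finset.mem_Icc] at ha
    simp only [addRightEmbedding_apply]
    rw [Nat.add_sub_cancel]
    congr 1
    omega
  -- Step 4: the single-sum part.
  have eB : (∑ d ∈ Finset.Icc 1 (D - 1), 2 * w (d - min d (k - 1)) (D - d - 1))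
      = 2 * (k - 2) + 2 * wstar (D - k) := by
    have hsplit : Finset.Icc 1 (D - 1) = Finset.Icc 1 (k - 2) ∪ Finset.Icc (k - 1) (D - 1) := by
      ext x
      simp only [Finset.mem_Icc, Finset.mem_union]
      omega
    have hdisj : Disjoint (Finset.Icc 1 (k - 2)) (Finset.Icc (k - 1) (D - 1)) := by
      rw [Finset.disjoint_left]
      intro x hx hx'
      simp only [Finset.mem_Icc] at hx hx'
      omega
    rw [hsplit, Finset.sum_union hdisj]
    congr 1
    · have h : ∀ d ∈ Finset.Icc 1 (k - 2), 2 * w (d - min d (k - 1)) (D - d - 1) = 2 := by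
        intro d hd
        simp only [Finset.mem_Icc] at hd
        have hm : min d (k - 1) = d := by omega
        rw [hm, Nat.sub_self, hax2]
      rw [Finset.sum_congr rfl h, Finset.sum_const, Nat.card_Icc, smul_eq_mul]
      have : k - 2 + 1 - 1 = k - 2 := by omega
      rw [this, Nat.mul_comm]
    · have h3 : Finset.Icc (k - 1) (D - 1)
          = Finset.map (addRightEmbedding (k - 1)) (Finset.Icc 0 (D - k)) := by
        rw [Finset.map_add_right_Icc]
        congr 1 <;> omega
      have h4 : Finset.Icc 0 (D - k) = Finset.range (D - k + 1) := by
        ext x; simp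
      rw [h3, Finset.sum_map, hws, Finset.mul_sum, ← h4]
      apply Finset.sum_congr rfl
      intro a ha
      simp only [Finset.mem_Icc] at ha
      simp only [addRightEmbedding_apply]
      have hm : min (a + (k - 1)) (k - 1) = k - 1 := by omega
      rw [hm, Nat.add_sub_cancel]
      congr 2
      omega
  -- Step 5: rewrite the RHS sum of wstar values.
  have eR : ∑ i ∈ Finset.Icc 2 (k - 1), wstar (D - i)
      = (k - 2) + ∑ i ∈ Finset.Icc 1 (k - 2), ∑ a ∈ Finset.Icc 1 (D - 1 - i),
          w a (D - 1 - i - a) := by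
    have hm : Finset.Icc 2 (k - 1) = Finset.map (addRightEmbedding 1) (Finset.Icc 1 (k - 2)) := by
      rw [Finset.map_add_right_Icc]
      congr 1 <;> omega
    rw [hm, Finset.sum_map]
    have h : ∀ i ∈ Finset.Icc 1 (k - 2),
        wstar (D - (addRightEmbedding 1 i))
        = 1 + ∑ a ∈ Finset.Icc 1 (D - 1 - i), w a (D - 1 - i - a) := by
      intro i hi
      simp only [Finset.mem_Icc] at hi
      simp only [addRightEmbedding_apply]
      rw [hws]
      have h1 : D - (i + 1) + 1 = (D - 1 - i) + 1 := by omega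
      rw [h1, split0, Nat.sub_zero, hax2]
      congr 1
      apply Finset.sum_congr rfl
      intro a ha
      congr 1
      omega
    rw [Finset.sum_congr rfl h, Finset.sum_add_distrib, Finset.sum_const, Nat.card_Icc,
      smul_eq_mul, mul_one]
    congr 1
  rw [e0, e1, eA, eB, eR]
  generalize (∑ i ∈ Finset.Icc 1 (k - 2), ∑ a ∈ Finset.Icc 1 (D - 1 - i),
      w a (D - 1 - i - a)) = X
  generalize wstar (D - k) = Y
  omega
end
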